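/- Folding preserves connectedness: with Φ simply laced, σ a Dynkin diagram automorphism (no vertex adjacent to its image), and Φ' the folded root system in V^σ, if a σ-invariant weight λ is connected with respect to Φ' (its Φ'-firing span is all of V^σ) then λ is connected with respect to Φ (its Φ-firing span is all of V). -/

import Mathlib

open scoped RealInnerProductSpace

noncomputable section

namespace CF

variable {V : Type*} [NormedAddCommGroup V] [InnerProductSpace ℝ V]

/-- The coroot `α∨ = 2α/⟨α,α⟩`. -/
def coroot (α : V) : V := (2 / ⟪α, α⟫) • α

/-- A reduced crystallographic root system in `V`. -/
def IsRootSystem (Φ : Set V) : Prop :=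
  Φ.Finite ∧ (0 : V) ∉ Φ ∧ Submodule.span ℝ Φ = ⊤ ∧
    (∀ α ∈ Φ, ∀ β ∈ Φ, β - ⟪β, coroot α⟫ • α ∈ Φ) ∧
    (∀ α ∈ Φ, ∀ t : ℝ, t • α ∈ Φ → t = 1 ∨ t = -1) ∧
    (∀ α ∈ Φ, ∀ β ∈ Φ, ∃ n : ℤ, ⟪β, coroot α⟫ = (n : ℝ))

/-- A choice of positive roots `Φ⁺ ⊆ Φ` (exactly one of `±α` is positive, and the positive
roots lie strictly on one side of a hyperplane). -/
def IsPositiveSystem (Φ Φp : Set V) : Prop :=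
  Φp ⊆ Φ ∧ (∀ α ∈ Φ, (α ∈ Φp ∨ -α ∈ Φp) ∧ ¬(α ∈ Φp ∧ -α ∈ Φp)) ∧
    ∃ ℓ : V →ₗ[ℝ] ℝ, ∀ α ∈ Φp, 0 < ℓ α

/-- The weight lattice `P = {v : ⟨v, α∨⟩ ∈ ℤ for all α ∈ Φ}`. -/
def weightLattice (Φ : Set V) : Set V :=
  {v | ∀ α ∈ Φ, ∃ n : ℤ, ⟪v, coroot α⟫ = (n : ℝ)}

/-- Central-firing: `λ → λ + α` whenever `α ∈ Φ⁺` and `⟨λ, α∨⟩ = 0`. -/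
def fire (Φp : Set V) (lam mu : V) : Prop :=
  ∃ α ∈ Φp, ⟪lam, coroot α⟫ = 0 ∧ mu = lam + α

/-- The Weyl group: the group of linear isometries generated by the reflections `s_α`, `α ∈ Φ`. -/
def weylGroup (Φ : Set V) : Subgroup (V ≃ₗᵢ[ℝ] V) :=
  Subgroup.closure {g | ∃ α ∈ Φ, ∀ v, g v = v - ⟪v, coroot α⟫ • α}

/-- `v` and `w` lie in the same Weyl group orbit. -/
def sameOrbit (Φ : Set V) (v w : V) : Prop := ∃ g ∈ weylGroup Φ, g v = w

def weylOrbit (Φ : Set V) (v : V) : Set V := {w | sameOrbit Φ v w}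

/-- The root lattice `Q`. -/
def rootLattice (Φ : Set V) : AddSubgroup V := AddSubgroup.closure Φ

/-- `Π^Q(λ)`: the points of the permutohedron `Π(λ) = ConvexHull(Wλ)` lying in `λ + Q`. -/
def permQ (Φ : Set V) (lam : V) : Set V :=
  {mu | mu ∈ convexHull ℝ (weylOrbit Φ lam) ∧ lam - mu ∈ rootLattice Φ}

def IsDominant (Δ : Set V) (lam : V) : Prop := ∀ a ∈ Δ, 0 ≤ ⟪lam, coroot a⟫

def IsStrictlyDominant (Δ : Set V) (lam : V) : Prop := ∀ a ∈ Δ, 0 < ⟪lam, coroot a⟫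

/-- A minuscule weight: a nonzero dominant weight whose `Π^Q` consists of its Weyl orbit. -/
def IsMinuscule (Φ Δ : Set V) (w : V) : Prop :=
  w ≠ 0 ∧ IsDominant Δ w ∧ ∀ mu ∈ permQ Φ w, sameOrbit Φ w mu

/-- `Δ` is a system of simple roots for the positive system `Φ⁺`. -/
def IsSimpleSystem (Φp : Set V) (Δ : Finset V) : Prop :=
  (Δ : Set V) ⊆ Φp ∧ LinearIndependent ℝ (fun a : (Δ : Set V) => (a : V)) ∧
    ∀ α ∈ Φp, ∃ c : V → ℝ, (∀ a ∈ Δ, 0 ≤ c a) ∧ α = ∑ a ∈ Δ, c a • a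

def IsSimplyLaced (Φ : Set V) : Prop := ∀ α ∈ Φ, ∀ β ∈ Φ, ⟪α, α⟫ = ⟪β, β⟫

/-- Irreducibility: `Φ` cannot be split into two nonempty mutually orthogonal parts. -/
def IsIrreducibleRS (Φ : Set V) : Prop :=
  ¬ ∃ S T : Set V, S.Nonempty ∧ T.Nonempty ∧ S ∪ T = Φ ∧ ∀ a ∈ S, ∀ b ∈ T, ⟪a, b⟫ = 0

/-- The firing span `FS_S(λ) = Span_ℝ{μ − λ : λ →* μ}`. -/
def firingSpan (Φp : Set V) (lam : V) : Submodule ℝ V :=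
  Submodule.span ℝ {d | ∃ mu, Relation.ReflTransGen (fire Φp) lam mu ∧ d = mu - lam}

/-- Central-firing on Weyl orbits: `Wλ → Wμ` iff some representatives fire. -/
def ofire (Φ Φp : Set V) (lam mu : V) : Prop :=
  ∃ lam' mu', sameOrbit Φ lam lam' ∧ sameOrbit Φ mu mu' ∧ fire Φp lam' mu'

/-- Connectivity of roots within a subset `Ψ` (via non-orthogonality). -/
def sameComponent (Ψ : Set V) (β γ : V) : Prop :=
  Relation.ReflTransGen (fun x y => x ∈ Ψ ∧ y ∈ Ψ ∧ ⟪x, y⟫ ≠ 0) β γ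

/-- Confluence of central-firing from `λ`: all maximal firing sequences from `λ`
terminate at the same weight. -/
def ConfluentFrom (S : Set V) (lam : V) : Prop :=
  ∀ mu₁ mu₂ : V, Relation.ReflTransGen (fire S) lam mu₁ → (¬ ∃ ν, fire S mu₁ ν) →
    Relation.ReflTransGen (fire S) lam mu₂ → (¬ ∃ ν, fire S mu₂ ν) → mu₁ = mu₂

/-- `β` is a positive root of the folded root system: the sum of a `σ`-orbit `B` of
pairwise orthogonal positive roots of `Φ`. -/
def IsFoldedPosRoot (σ : V ≃ₗᵢ[ℝ] V) (Φp : Set V) (β : V) : Prop :=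
  ∃ B : Finset V, (B : Set V) ⊆ Φp ∧ B.Nonempty ∧
    (∀ γ ∈ B, σ γ ∈ B) ∧
    (∀ γ ∈ B, ∀ δ ∈ B, ∃ k : ℕ, (fun v => σ v)^[k] γ = δ) ∧
    (∀ γ ∈ B, ∀ δ ∈ B, γ ≠ δ → ⟪γ, δ⟫ = 0) ∧
    β = ∑ γ ∈ B, γ

/-! ### auxiliary lemmas -/

lemma inner_coroot' (x α : V) : ⟪x, coroot α⟫ = (2 / ⟪α, α⟫) * ⟪x, α⟫ :=
  real_inner_smul_right x α _

lemma inner_self_pos' {x : V} (h : x ≠ 0) : 0 < ⟪x, x⟫ :=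
  lt_of_le_of_ne real_inner_self_nonneg
    (by simpa [eq_comm] using (inner_self_ne_zero (𝕜 := ℝ)).2 h)

lemma coroot_neg' (α : V) : coroot (-α) = - coroot α := by
  simp [coroot, smul_neg]

variable {S P : Set V}

lemma root_ne_zero (hΦ : IsRootSystem S) {α : V} (hα : α ∈ S) : α ≠ 0 :=
  fun h => hΦ.2.1 (h ▸ hα)

lemma root_self_pos (hΦ : IsRootSystem S) {α : V} (hα : α ∈ S) : 0 < ⟪α, α⟫ :=
  inner_self_pos' (root_ne_zero hΦ hα)

lemma self_coroot (hΦ : IsRootSystem S) {α : V} (hα : α ∈ S) : ⟪α, coroot α⟫ = 2 := by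
  rw [inner_coroot']
  field_simp [ne_of_gt (root_self_pos hΦ hα)]
  exact div_self (root_self_pos hΦ hα).ne'

lemma neg_root_mem (hΦ : IsRootSystem S) {α : V} (hα : α ∈ S) : -α ∈ S := by
  have h := hΦ.2.2.2.1 α hα α hα
  have h2 : α - ⟪α, coroot α⟫ • α = -α := by
    rw [self_coroot hΦ hα, two_smul]; abel
  rwa [h2] at h

lemma cartan_int (hΦ : IsRootSystem S) {γ δ : V} (hγ : γ ∈ S) (hδ : δ ∈ S) :
    ∃ n : ℤ, ⟪γ, coroot δ⟫ = (n : ℝ) := hΦ.2.2.2.2.2 δ hδ γ hγ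

lemma cartan_abs_le (hΦ : IsRootSystem S) (hsl : IsSimplyLaced S) {γ δ : V}
    (hγ : γ ∈ S) (hδ : δ ∈ S) (h1 : γ ≠ δ) (h2 : γ ≠ -δ) :
    ∃ n : ℤ, ⟪γ, coroot δ⟫ = (n : ℝ) ∧ |n| ≤ 1 := by
  obtain ⟨n, hn⟩ := cartan_int hΦ hγ hδ
  refine ⟨n, hn, ?_⟩
  have hc : 0 < ⟪δ, δ⟫ := root_self_pos hΦ hδ
  have hcc : ⟪γ, γ⟫ = ⟪δ, δ⟫ := hsl γ hγ δ hδ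
  have hgd : ⟪γ, δ⟫ = (n : ℝ) * ⟪δ, δ⟫ / 2 := by
    rw [inner_coroot'] at hn
    field_simp at hn ⊢
    linarith [hn]
  by_contra hgt
  push_neg at hgt
  have h2le : 2 ≤ |n| := hgt
  have hcs : ⟪γ, δ⟫ * ⟪γ, δ⟫ ≤ ⟪γ, γ⟫ * ⟪δ, δ⟫ := real_inner_mul_inner_self_le γ δ
  rw [hgd, hcc] at hcs
  have hmul : ((n : ℝ))^2 * (⟪δ, δ⟫ * ⟪δ, δ⟫) ≤ 4 * (⟪δ, δ⟫ * ⟪δ, δ⟫) := by nlinarith [hcs]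
  have hn2 : ((n : ℝ))^2 ≤ 4 := le_of_mul_le_mul_right (by linarith [hmul]) (mul_pos hc hc)
  have hn2' : n ^ 2 ≤ 4 := by exact_mod_cast hn2
  have habs : |n| ≤ 2 := by nlinarith [sq_abs n, abs_nonneg n]
  have heq : |n| = 2 := le_antisymm habs h2le
  rcases (abs_eq (by norm_num : (0:ℤ) ≤ 2)).1 heq with h | h
  · apply h1
    have hz : ⟪γ - δ, γ - δ⟫ = 0 := by
      rw [real_inner_sub_sub_self, hgd, hcc, h]
      push_cast
      ring
    exact sub_eq_zero.1 ((inner_self_eq_zero (𝕜 := ℝ)).1 hz)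
  · apply h2
    have hz : ⟪γ + δ, γ + δ⟫ = 0 := by
      rw [real_inner_add_add_self, hgd, hcc, h]
      push_cast
      ring
    exact eq_neg_of_add_eq_zero_left ((inner_self_eq_zero (𝕜 := ℝ)).1 hz)

/-! ### firing dynamics -/

lemma fired_mem_span {lam x γ : V} (hx : Relation.ReflTransGen (fire P) lam x)
    (hγ : γ ∈ P) (h0 : ⟪x, coroot γ⟫ = 0) : γ ∈ firingSpan P lam := by
  have hx' : Relation.ReflTransGen (fire P) lam (x + γ) := hx.tail ⟨γ, hγ, h0, rfl⟩
  have m1 : x + γ - lam ∈ {d | ∃ mu, Relation.ReflTransGen (fire P) lam mu ∧ d = mu - lam} :=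
    ⟨x + γ, hx', rfl⟩
  have m2 : x - lam ∈ {d | ∃ mu, Relation.ReflTransGen (fire P) lam mu ∧ d = mu - lam} :=
    ⟨x, hx, rfl⟩
  have hγeq : γ = (x + γ - lam) - (x - lam) := by abel
  rw [hγeq]
  exact sub_mem (Submodule.subset_span m1) (Submodule.subset_span m2)

lemma vanish_mem (hΦ : IsRootSystem S) (hp : IsPositiveSystem S P) {lam x δ : V}
    (hδ : δ ∈ S) (hx : Relation.ReflTransGen (fire P) lam x)
    (h0 : ⟪x, coroot δ⟫ = 0) : δ ∈ firingSpan P lam := by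
  rcases (hp.2.1 δ hδ).1 with h | h
  · exact fired_mem_span hx h h0
  · have h0' : ⟪x, coroot (-δ)⟫ = 0 := by
      rw [coroot_neg', inner_neg_right, h0, neg_zero]
    have := fired_mem_span hx h h0'
    simpa using (firingSpan P lam).neg_mem this

lemma reach_pairing_int (hΦ : IsRootSystem S) (hp : IsPositiveSystem S P)
    {lam x : V} (hlam : lam ∈ weightLattice S)
    (hx : Relation.ReflTransGen (fire P) lam x) {δ : V} (hδ : δ ∈ S) :
    ∃ n : ℤ, ⟪x, coroot δ⟫ = (n : ℝ) := by
  induction hx with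
  | refl => exact hlam δ hδ
  | tail hb hf ih =>
    obtain ⟨γ, hγ, h0, rfl⟩ := hf
    obtain ⟨n, hn⟩ := ih
    obtain ⟨m, hm⟩ := cartan_int hΦ (hp.1 hγ) hδ
    exact ⟨n + m, by rw [inner_add_left, hn, hm]; push_cast; ring⟩

lemma pos_walk (hΦ : IsRootSystem S) (hp : IsPositiveSystem S P) (hsl : IsSimplyLaced S)
    {lam : V} (hlam : lam ∈ weightLattice S) {δ : V} (hδ : δ ∈ S)
    (hδU : δ ∉ firingSpan P lam) (h0 : 0 < ⟪lam, coroot δ⟫) :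
    ∀ x, Relation.ReflTransGen (fire P) lam x → 0 < ⟪x, coroot δ⟫ := by
  intro x hx
  induction hx with
  | refl => exact h0
  | @tail b c hb hf ih =>
    obtain ⟨γ, hγ, hγ0, rfl⟩ := hf
    have hγS : γ ∈ S := hp.1 hγ
    have hγU : γ ∈ firingSpan P lam := fired_mem_span hb hγ hγ0
    have h1 : γ ≠ δ := fun h => hδU (h ▸ hγU)
    have h2 : γ ≠ -δ := by
      rintro rfl
      exact hδU (by simpa using (firingSpan P lam).neg_mem hγU)
    obtain ⟨m, hm, hm1⟩ := cartan_abs_le hΦ hsl hγS hδ h1 h2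
    obtain ⟨n, hn⟩ := reach_pairing_int hΦ hp hlam hb hδ
    have hval : ⟪b + γ, coroot δ⟫ = ((n + m : ℤ) : ℝ) := by
      rw [inner_add_left, hn, hm]; push_cast; ring
    have hne : ⟪b + γ, coroot δ⟫ ≠ 0 := by
      intro h
      exact hδU (vanish_mem hΦ hp hδ (hb.tail ⟨γ, hγ, hγ0, rfl⟩) h)
    have hn1 : 1 ≤ n := by
      have : (0:ℝ) < (n:ℝ) := hn ▸ ih
      exact_mod_cast this
    have hmge : (-1 : ℤ) ≤ m := neg_le_of_abs_le hm1
    have hnm : n + m ≠ 0 := by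
      intro h
      apply hne
      rw [hval, h]
      norm_num
    have hpos : 0 < n + m := by omega
    rw [hval]
    exact_mod_cast hpos

lemma reach_iso (τ : V ≃ₗᵢ[ℝ] V) {lam : V} (hτl : τ lam = lam)
    (hτp : ∀ α ∈ P, τ α ∈ P) {x : V}
    (hx : Relation.ReflTransGen (fire P) lam x) :
    Relation.ReflTransGen (fire P) lam (τ x) := by
  induction hx with
  | refl => rw [hτl]
  | @tail b c hb hf ih =>
    obtain ⟨γ, hγ, h0, rfl⟩ := hf
    refine ih.tail ⟨τ γ, hτp γ hγ, ?_, (map_add τ b γ)⟩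
    rw [inner_coroot', τ.inner_map_map, τ.inner_map_map, ← inner_coroot', h0]

lemma span_iso (τ : V ≃ₗᵢ[ℝ] V) {lam : V} (hτl : τ lam = lam)
    (hτp : ∀ α ∈ P, τ α ∈ P) {u : V} (hu : u ∈ firingSpan P lam) :
    τ u ∈ firingSpan P lam := by
  have h1 : τ u ∈ Submodule.map (τ.toLinearEquiv.toLinearMap) (firingSpan P lam) :=
    Submodule.mem_map_of_mem hu
  rw [firingSpan, Submodule.map_span] at h1
  refine Submodule.span_le.2 ?_ h1
  rintro d ⟨e, ⟨mu, hmu, rfl⟩, rfl⟩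
  have : τ.toLinearEquiv.toLinearMap (mu - lam) = τ mu - lam := by
    show τ (mu - lam) = τ mu - lam
    rw [map_sub, hτl]
  rw [this]
  exact Submodule.subset_span ⟨τ mu, reach_iso τ hτl hτp hmu, rfl⟩

lemma fire_finset {P : Set V} :
    ∀ B : Finset V, (B : Set V) ⊆ P →
      (∀ γ ∈ B, ∀ δ ∈ B, γ ≠ δ → ⟪γ, δ⟫ = 0) →
      ∀ μ : V, (∀ γ ∈ B, ⟪μ, coroot γ⟫ = 0) →
      Relation.ReflTransGen (fire P) μ (μ + ∑ γ ∈ B, γ) := by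
  classical
  intro B
  induction B using Finset.induction_on with
  | empty => intro _ _ μ _; simpa using Relation.ReflTransGen.refl
  | @insert a s ha ih =>
    intro hBp horth μ hpair
    have haP : a ∈ P := hBp (Finset.mem_insert_self a s)
    have hfire : fire P μ (μ + a) := ⟨a, haP, hpair a (Finset.mem_insert_self a s), rfl⟩
    have hsub : (s : Set V) ⊆ P := fun y hy => hBp (Finset.mem_insert_of_mem hy)
    have horth' : ∀ γ ∈ s, ∀ δ ∈ s, γ ≠ δ → ⟪γ, δ⟫ = 0 := fun γ hγ δ hδ h =>
      horth γ (Finset.mem_insert_of_mem hγ) δ (Finset.mem_insert_of_mem hδ) h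
    have hpair' : ∀ γ ∈ s, ⟪μ + a, coroot γ⟫ = 0 := by
      intro γ hγ
      have hne : a ≠ γ := fun h => ha (h ▸ hγ)
      have : ⟪a, γ⟫ = 0 :=
        horth a (Finset.mem_insert_self a s) γ (Finset.mem_insert_of_mem hγ) hne
      rw [inner_add_left, hpair γ (Finset.mem_insert_of_mem hγ), inner_coroot', this,
        mul_zero, add_zero]
    have hrec := ih hsub horth' (μ + a) hpair'
    have heq : μ + a + ∑ γ ∈ s, γ = μ + ∑ γ ∈ insert a s, γ := by
      rw [Finset.sum_insert ha]; abel
    rw [← heq]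
    exact Relation.ReflTransGen.head hfire hrec

lemma folded_lift (hΦ : IsRootSystem S) (hp : IsPositiveSystem S P)
    {σ : V ≃ₗᵢ[ℝ] V} {lam : V} (hσlam : σ lam = lam) {mu : V}
    (h : Relation.ReflTransGen (fire {β | IsFoldedPosRoot σ P β}) lam mu) :
    Relation.ReflTransGen (fire P) lam mu ∧ σ mu = mu := by
  classical
  induction h with
  | refl => exact ⟨Relation.ReflTransGen.refl, hσlam⟩
  | @tail b c hb hf ih =>
    obtain ⟨hreach, hinv⟩ := ih
    obtain ⟨β, hβ, h0, rfl⟩ := hf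
    obtain ⟨B, hBp, hBne, hBσ, hBtr, hBorth, rfl⟩ := hβ
    have iter_inner : ∀ (k : ℕ) (v : V), ⟪b, (fun v => σ v)^[k] v⟫ = ⟪b, v⟫ := by
      intro k
      induction k with
      | zero => simp
      | succ k ihk =>
        intro v
        rw [Function.iterate_succ_apply, ihk (σ v)]
        calc ⟪b, σ v⟫ = ⟪σ b, σ v⟫ := by rw [hinv]
          _ = ⟪b, v⟫ := σ.inner_map_map b v
    obtain ⟨γ₀, hγ₀⟩ := hBne
    have hall : ∀ γ ∈ B, ⟪b, γ⟫ = ⟪b, γ₀⟫ := by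
      intro γ hγ
      obtain ⟨k, hk⟩ := hBtr γ₀ hγ₀ γ hγ
      rw [← hk, iter_inner]
    have hββ : 0 < ⟪∑ γ ∈ B, γ, ∑ γ ∈ B, γ⟫ := by
      rw [sum_inner]
      have hdiag : ∀ γ ∈ B, ⟪γ, ∑ δ ∈ B, δ⟫ = ⟪γ, γ⟫ := by
        intro γ hγ
        rw [inner_sum]
        exact Finset.sum_eq_single_of_mem γ hγ
          (fun d hd hne => hBorth γ hγ d hd (fun h => hne h.symm))
      rw [Finset.sum_congr rfl hdiag]
      exact Finset.sum_pos (fun γ hγ => root_self_pos hΦ (hp.1 (hBp hγ))) ⟨γ₀, hγ₀⟩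
    have hbβ : ⟪b, ∑ γ ∈ B, γ⟫ = 0 := by
      rw [inner_coroot'] at h0
      rcases mul_eq_zero.1 h0 with h | h
      · exact absurd h (div_ne_zero two_ne_zero (ne_of_gt hββ))
      · exact h
    have hγ₀0 : ⟪b, γ₀⟫ = 0 := by
      have hsum : ⟪b, ∑ γ ∈ B, γ⟫ = (B.card : ℝ) * ⟪b, γ₀⟫ := by
        rw [inner_sum, Finset.sum_congr rfl hall, Finset.sum_const, nsmul_eq_mul]
      rw [hsum] at hbβ
      rcases mul_eq_zero.1 hbβ with h | h
      · exact absurd h (by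
          simp only [ne_eq, Nat.cast_eq_zero, Finset.card_eq_zero]
          exact Finset.ne_empty_of_mem hγ₀)
      · exact h
    have hall0 : ∀ γ ∈ B, ⟪b, coroot γ⟫ = 0 := by
      intro γ hγ
      rw [inner_coroot', hall γ hγ, hγ₀0, mul_zero]
    refine ⟨hreach.trans (fire_finset B hBp hBorth b hall0), ?_⟩
    have himg : B.image σ = B := by
      apply Finset.eq_of_subset_of_card_le
      · intro y hy
        obtain ⟨z, hz, rfl⟩ := Finset.mem_image.1 hy
        exact hBσ z hz
      · rw [Finset.card_image_of_injective _ σ.injective]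
    have hσsum : σ (∑ γ ∈ B, γ) = ∑ γ ∈ B, γ := by
      rw [map_sum]
      calc ∑ γ ∈ B, σ γ = ∑ y ∈ B.image σ, y :=
            (Finset.sum_image (g := (σ : V → V)) (f := fun y => y) (fun x _ y _ h => σ.injective h)).symm
        _ = ∑ γ ∈ B, γ := by rw [himg]
    rw [map_add, hinv, hσsum]

/-! ### the reflection-orbit argument -/

lemma coroot_iso (τ : V ≃ₗᵢ[ℝ] V) (v : V) : coroot (τ v) = τ (coroot v) := by
  rw [coroot, coroot, τ.inner_map_map, map_smul]

lemma pos_coroot_iff (hΦ : IsRootSystem S) {δ : V} (hδ : δ ∈ S) (x : V) :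
    0 < ⟪x, coroot δ⟫ ↔ 0 < ⟪x, δ⟫ := by
  rw [inner_coroot']
  have h2c : 0 < 2 / ⟪δ, δ⟫ := div_pos two_pos (root_self_pos hΦ hδ)
  constructor
  · intro h; nlinarith
  · intro h; exact mul_pos h2c h

lemma symm_stab {τ : V ≃ₗᵢ[ℝ] V} {A : Set V} (hA : A.Finite) (h : ∀ a ∈ A, τ a ∈ A) :
    ∀ a ∈ A, τ.symm a ∈ A := by
  classical
  intro a ha
  have himg : hA.toFinset.image τ = hA.toFinset := by
    apply Finset.eq_of_subset_of_card_le
    · intro y hy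
      obtain ⟨z, hz, rfl⟩ := Finset.mem_image.1 hy
      exact hA.mem_toFinset.2 (h z (hA.mem_toFinset.1 hz))
    · rw [Finset.card_image_of_injective _ τ.injective]
  have : a ∈ hA.toFinset.image τ := by rw [himg]; exact hA.mem_toFinset.2 ha
  obtain ⟨b, hb, hbe⟩ := Finset.mem_image.1 this
  have hba : τ.symm a = b := by rw [← hbe, τ.symm_apply_apply]
  rw [hba]
  exact hA.mem_toFinset.1 hb

lemma reflect_inj (hΦ : IsRootSystem S) {γ : V} (hγ : γ ∈ S) :
    Function.Injective (fun δ : V => δ - ⟪δ, coroot γ⟫ • γ) := by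
  intro d₁ d₂ h
  simp only at h
  have h2 := self_coroot hΦ hγ
  have e : ∀ d : V, ⟪d - ⟪d, coroot γ⟫ • γ, coroot γ⟫ = -⟪d, coroot γ⟫ := by
    intro d
    rw [inner_sub_left, real_inner_smul_left, h2]
    ring
  have hc : ⟪d₁, coroot γ⟫ = ⟪d₂, coroot γ⟫ := by
    have h' := congrArg (fun v => ⟪v, coroot γ⟫) h
    rw [e d₁, e d₂] at h'
    linarith
  rw [hc] at h
  exact sub_left_inj.mp h

lemma finset_sum_inv {F : Finset V} {f : V → V} (hinj : Function.Injective f)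
    (hcl : ∀ a ∈ F, f a ∈ F) : ∑ a ∈ F, f a = ∑ a ∈ F, a := by
  classical
  have himg : F.image f = F := by
    apply Finset.eq_of_subset_of_card_le
    · intro y hy
      obtain ⟨z, hz, rfl⟩ := Finset.mem_image.1 hy
      exact hcl z hz
    · rw [Finset.card_image_of_injective _ hinj]
  calc ∑ a ∈ F, f a = ∑ y ∈ F.image f, y :=
        (Finset.sum_image (g := f) (f := fun y => y) (fun x _ y _ h => hinj h)).symm
    _ = ∑ a ∈ F, a := by rw [himg]

/-- Step relation on roots outside the firing span. -/
def FStep (P : Set V) (lam : V) (σ : V ≃ₗᵢ[ℝ] V) : V → V → Prop := fun δ δ' =>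
  δ' = σ δ ∨ ∃ γ x, γ ∈ P ∧ Relation.ReflTransGen (fire P) lam x ∧ ⟪x, coroot γ⟫ = 0 ∧
    δ' = δ - ⟪δ, coroot γ⟫ • γ

/-- The good predicate: a root outside the firing span with positive pairing on all
reachable weights. -/
def FGood (S P : Set V) (lam δ : V) : Prop :=
  δ ∈ S ∧ δ ∉ firingSpan P lam ∧
    ∀ x, Relation.ReflTransGen (fire P) lam x → 0 < ⟪x, coroot δ⟫

lemma good_init (hΦ : IsRootSystem S) (hp : IsPositiveSystem S P) (hsl : IsSimplyLaced S)
    {lam : V} (hlam : lam ∈ weightLattice S) {δ : V} (hδ : δ ∈ S)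
    (hδU : δ ∉ firingSpan P lam) : FGood S P lam δ ∨ FGood S P lam (-δ) := by
  have hne : ⟪lam, coroot δ⟫ ≠ 0 := fun h =>
    hδU (vanish_mem hΦ hp hδ Relation.ReflTransGen.refl h)
  rcases lt_or_gt_of_ne hne with h | h
  · right
    have hδ' : -δ ∈ S := neg_root_mem hΦ hδ
    have hδ'U : -δ ∉ firingSpan P lam := fun hm =>
      hδU (by simpa using (firingSpan P lam).neg_mem hm)
    have h0 : 0 < ⟪lam, coroot (-δ)⟫ := by
      rw [coroot_neg', inner_neg_right]
      linarith
    exact ⟨hδ', hδ'U, pos_walk hΦ hp hsl hlam hδ' hδ'U h0⟩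
  · exact Or.inl ⟨hδ, hδU, pos_walk hΦ hp hsl hlam hδ hδU h⟩

lemma good_step (hΦ : IsRootSystem S) (hp : IsPositiveSystem S P) (hsl : IsSimplyLaced S)
    {σ : V ≃ₗᵢ[ℝ] V} (hσS : ∀ α ∈ S, σ α ∈ S) (hσP : ∀ α ∈ P, σ α ∈ P)
    {lam : V} (hlam : lam ∈ weightLattice S) (hσlam : σ lam = lam)
    {δ δ' : V} (hG : FGood S P lam δ) (hstep : FStep P lam σ δ δ') :
    FGood S P lam δ' := by
  obtain ⟨hδS, hδU, hpos⟩ := hG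
  have hPfin : P.Finite := hΦ.1.subset hp.1
  have hsymm_p : ∀ α ∈ P, σ.symm α ∈ P := symm_stab hPfin hσP
  have hsymm_lam : σ.symm lam = lam := by
    conv_lhs => rw [← hσlam]
    exact σ.symm_apply_apply lam
  rcases hstep with rfl | ⟨γ, x, hγ, hx, h0, rfl⟩
  · refine ⟨hσS δ hδS, ?_, ?_⟩
    · intro h
      have := span_iso σ.symm hsymm_lam hsymm_p h
      rw [σ.symm_apply_apply] at this
      exact hδU this
    · intro x hx
      rw [coroot_iso]
      calc (0:ℝ) < ⟪σ.symm x, coroot δ⟫ :=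
            hpos _ (reach_iso σ.symm hsymm_lam hsymm_p hx)
        _ = ⟪σ (σ.symm x), σ (coroot δ)⟫ := (σ.inner_map_map _ _).symm
        _ = ⟪x, σ (coroot δ)⟫ := by rw [σ.apply_symm_apply]
  · have hγS : γ ∈ S := hp.1 hγ
    have hδ'S : δ - ⟪δ, coroot γ⟫ • γ ∈ S := hΦ.2.2.2.1 γ hγS δ hδS
    have hγU : γ ∈ firingSpan P lam := fired_mem_span hx hγ h0
    have hδ'U : δ - ⟪δ, coroot γ⟫ • γ ∉ firingSpan P lam := by
      intro h
      apply hδU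
      have : δ = (δ - ⟪δ, coroot γ⟫ • γ) + ⟪δ, coroot γ⟫ • γ := by abel
      rw [this]
      exact add_mem h (Submodule.smul_mem _ _ hγU)
    -- positivity at the witness x
    have hxγ : ⟪x, γ⟫ = 0 := by
      rw [inner_coroot'] at h0
      rcases mul_eq_zero.1 h0 with h | h
      · exact absurd h (div_ne_zero two_ne_zero (ne_of_gt (root_self_pos hΦ hγS)))
      · exact h
    have hw : 0 < ⟪x, coroot (δ - ⟪δ, coroot γ⟫ • γ)⟫ := by
      rw [pos_coroot_iff hΦ hδ'S]
      have h1 : ⟪x, δ - ⟪δ, coroot γ⟫ • γ⟫ = ⟪x, δ⟫ := by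
        rw [inner_sub_right, real_inner_smul_right, hxγ, mul_zero, sub_zero]
      rw [h1]
      exact (pos_coroot_iff hΦ hδS x).1 (hpos x hx)
    rcases good_init hΦ hp hsl hlam hδ'S hδ'U with h | h
    · exact h
    · exfalso
      have := h.2.2 x hx
      rw [coroot_neg', inner_neg_right] at this
      linarith

theorem main_aux (hΦ : IsRootSystem S) (hp : IsPositiveSystem S P) (hsl : IsSimplyLaced S)
    (σ : V ≃ₗᵢ[ℝ] V) (hσS : ∀ α ∈ S, σ α ∈ S) (hσP : ∀ α ∈ P, σ α ∈ P)
    {lam : V} (hlam : lam ∈ weightLattice S) (hσlam : σ lam = lam)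
    (hconn' : firingSpan {β | IsFoldedPosRoot σ P β} lam =
      LinearMap.eqLocus σ.toLinearEquiv.toLinearMap LinearMap.id) :
    firingSpan P lam = ⊤ := by
  classical
  by_contra hne
  -- a root outside the span
  have hex : ∃ δ, δ ∈ S ∧ δ ∉ firingSpan P lam := by
    by_contra h
    push_neg at h
    have hle : Submodule.span ℝ S ≤ firingSpan P lam :=
      Submodule.span_le.2 fun δ hδ => h δ hδ
    rw [hΦ.2.2.1] at hle
    exact hne (top_le_iff.1 hle)
  obtain ⟨δ₁, hδ₁S, hδ₁U⟩ := hex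
  obtain ⟨δ₀, hG₀⟩ : ∃ δ₀, FGood S P lam δ₀ := by
    rcases good_init hΦ hp hsl hlam hδ₁S hδ₁U with h | h
    exacts [⟨δ₁, h⟩, ⟨-δ₁, h⟩]
  -- the reflection/σ orbit of δ₀
  set O : Set V := {δ' | Relation.ReflTransGen (FStep P lam σ) δ₀ δ'} with hOdef
  have hOG : ∀ δ' ∈ O, FGood S P lam δ' := by
    intro δ' hδ'
    induction hδ' with
    | refl => exact hG₀
    | tail _ hstep ih => exact good_step hΦ hp hsl hσS hσP hlam hσlam ih hstep
  have hδ₀O : δ₀ ∈ O := Relation.ReflTransGen.refl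
  have hOS : O ⊆ S := fun δ h => (hOG δ h).1
  have hOfin : O.Finite := hΦ.1.subset hOS
  have hmemF : ∀ {d : V}, d ∈ hOfin.toFinset ↔ d ∈ O := fun {d} => hOfin.mem_toFinset
  have hFne : hOfin.toFinset.Nonempty := ⟨δ₀, hmemF.2 hδ₀O⟩
  set ξ : V := ∑ d ∈ hOfin.toFinset, d with hξdef
  -- σ-invariance of ξ
  have hσO : ∀ d ∈ hOfin.toFinset, σ d ∈ hOfin.toFinset := by
    intro d hd
    exact hmemF.2 ((hmemF.1 hd).tail (Or.inl rfl))
  have hσξ : σ ξ = ξ := by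
    rw [hξdef, map_sum]
    exact finset_sum_inv σ.injective hσO
  -- ξ is orthogonal to every fired root
  have hξγ : ∀ γ x, γ ∈ P → Relation.ReflTransGen (fire P) lam x →
      ⟪x, coroot γ⟫ = 0 → ⟪ξ, γ⟫ = 0 := by
    intro γ x hγ hx h0
    have hγS : γ ∈ S := hp.1 hγ
    have hgO : ∀ d ∈ hOfin.toFinset, d - ⟪d, coroot γ⟫ • γ ∈ hOfin.toFinset := by
      intro d hd
      exact hmemF.2 ((hmemF.1 hd).tail (Or.inr ⟨γ, x, hγ, hx, h0, rfl⟩))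
    have hsum : ∑ d ∈ hOfin.toFinset, (d - ⟪d, coroot γ⟫ • γ) = ξ :=
      finset_sum_inv (reflect_inj hΦ hγS) hgO
    have h' : ∑ d ∈ hOfin.toFinset, (d - ⟪d, coroot γ⟫ • γ)
        = (∑ d ∈ hOfin.toFinset, d) - (∑ d ∈ hOfin.toFinset, ⟪d, coroot γ⟫) • γ := by
      rw [Finset.sum_sub_distrib, ← Finset.sum_smul]
    rw [h'] at hsum
    have hz : (∑ d ∈ hOfin.toFinset, ⟪d, coroot γ⟫) • γ = 0 := sub_eq_self.mp hsum
    have hsc : ∑ d ∈ hOfin.toFinset, ⟪d, coroot γ⟫ = 0 := by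
      rcases smul_eq_zero.1 hz with h | h
      · exact h
      · exact absurd h (root_ne_zero hΦ hγS)
    have hsc2 : ⟪ξ, coroot γ⟫ = 0 := by
      rw [hξdef, sum_inner]
      exact hsc
    rw [inner_coroot'] at hsc2
    rcases mul_eq_zero.1 hsc2 with h | h
    · exact absurd h (div_ne_zero two_ne_zero (ne_of_gt (root_self_pos hΦ hγS)))
    · exact h
  -- ξ is orthogonal to the firing span
  have hperp : ∀ x, Relation.ReflTransGen (fire P) lam x → ⟪x - lam, ξ⟫ = 0 := by
    intro x hx
    induction hx with
    | refl => simp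
    | @tail b c hb hf ih =>
      obtain ⟨γ, hγ, h0, rfl⟩ := hf
      have h3 : ⟪γ, ξ⟫ = 0 := by
        rw [real_inner_comm]
        exact hξγ γ b hγ hb h0
      have he : b + γ - lam = (b - lam) + γ := by abel
      rw [he, inner_add_left, ih, h3, add_zero]
  have hUperp : ∀ u ∈ firingSpan P lam, ⟪u, ξ⟫ = 0 := by
    intro u hu
    induction hu using Submodule.span_induction with
    | mem d hd =>
      obtain ⟨mu, hmu, rfl⟩ := hd
      exact hperp mu hmu
    | zero => exact inner_zero_left ξ
    | add a b _ _ ha hb => rw [inner_add_left, ha, hb, add_zero]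
    | smul r a _ ha => rw [real_inner_smul_left, ha, mul_zero]
  -- ξ lies in V^σ hence in the firing span, so ξ = 0
  have hξVσ : ξ ∈ LinearMap.eqLocus σ.toLinearEquiv.toLinearMap (LinearMap.id (M := V)) :=
    LinearMap.mem_eqLocus.2 (by simpa using hσξ)
  have hfold_le : firingSpan {β | IsFoldedPosRoot σ P β} lam ≤ firingSpan P lam := by
    apply Submodule.span_le.2
    rintro d ⟨mu, hmu, rfl⟩
    exact Submodule.subset_span ⟨mu, (folded_lift hΦ hp hσlam hmu).1, rfl⟩
  have hξU : ξ ∈ firingSpan P lam := by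
    apply hfold_le
    rw [hconn']
    exact hξVσ
  have hξ0 : ξ = 0 := (inner_self_eq_zero (𝕜 := ℝ)).1 (hUperp ξ hξU)
  -- contradiction with positivity at lam
  have hposum : (0:ℝ) < ∑ d ∈ hOfin.toFinset, ⟪lam, d⟫ := by
    refine Finset.sum_pos (fun d hd => ?_) hFne
    have hG := hOG d (hmemF.1 hd)
    exact (pos_coroot_iff hΦ hG.1 lam).1 (hG.2.2 lam Relation.ReflTransGen.refl)
  have : ∑ d ∈ hOfin.toFinset, ⟪lam, d⟫ = ⟪lam, ξ⟫ := (inner_sum _ _ _).symm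
  rw [this, hξ0, inner_zero_right] at hposum
  exact lt_irrefl _ hposum


/-- folding preserves connectedness.  If the `σ`-invariant weight `λ` is
connected with respect to the folded system `Φ'` (its `Φ'`-firing span is all of
`V^σ = {v : σv = v}`), then `λ` is connected with respect to `Φ`. -/
theorem folding_connected (Φ Φp Δ : Finset V)
    (hΦ : IsRootSystem (Φ : Set V)) (hp : IsPositiveSystem (Φ : Set V) (Φp : Set V))
    (hΔ : IsSimpleSystem (Φp : Set V) Δ) (hsl : IsSimplyLaced (Φ : Set V))
    (σ : V ≃ₗᵢ[ℝ] V)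
    (hσΦ : ∀ α ∈ Φ, σ α ∈ Φ) (hσp : ∀ α ∈ Φp, σ α ∈ Φp) (hσΔ : ∀ a ∈ Δ, σ a ∈ Δ)
    (hadj : ∀ a ∈ Δ, ∀ k : ℕ, (fun v => σ v)^[k] a ≠ a → ⟪a, (fun v => σ v)^[k] a⟫ = 0)
    (lam : V) (hlam : lam ∈ weightLattice (Φ : Set V)) (hσlam : σ lam = lam)
    (hconn' : firingSpan {β | IsFoldedPosRoot σ (Φp : Set V) β} lam =
      LinearMap.eqLocus σ.toLinearEquiv.toLinearMap LinearMap.id) :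
    firingSpan (Φp : Set V) lam = ⊤ := by
  have hσS : ∀ α ∈ (Φ : Set V), σ α ∈ (Φ : Set V) := fun α hα =>
    Finset.mem_coe.2 (hσΦ α (Finset.mem_coe.1 hα))
  have hσP : ∀ α ∈ (Φp : Set V), σ α ∈ (Φp : Set V) := fun α hα =>
    Finset.mem_coe.2 (hσp α (Finset.mem_coe.1 hα))
  exact main_aux hΦ hp hsl σ hσS hσP hlam hσlam hconn'

end CF
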